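/- Let G be a finite connected simple graph with maximum degree Δ ≥ 2. Then the decycling number of G satisfies ∇(G) ≥ (|E(G)| − |V(G)| + 1)/(Δ − 1); equivalently, every decycling set S of G satisfies (Δ − 1)·|S| ≥ |E(G)| − |V(G)| + 1. -/

import Mathlib

open SimpleGraph

/-- `S` is a decycling set of `G` if the subgraph of `G` induced on the complement of `S`
is acyclic. -/
def SimpleGraph.IsDecyclingSet {V : Type*} (G : SimpleGraph V) (S : Set V) : Prop :=
  (G.induce Sᶜ).IsAcyclic

/-- The decycling number `∇(G)` of `G`: the minimum cardinality of a decycling set of `G`. -/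
noncomputable def SimpleGraph.decyclingNumber {V : Type*} (G : SimpleGraph V) : ℕ :=
  sInf {k | ∃ S : Set V, G.IsDecyclingSet S ∧ S.ncard = k}

/-- For a finite connected simple graph `G` with maximum degree `Δ ≥ 2`, the decycling number
satisfies `∇(G) ≥ (|E(G)| − |V(G)| + 1)/(Δ − 1)`; equivalently, every decycling set `S` of `G`
satisfies `(Δ − 1)·|S| ≥ |E(G)| − |V(G)| + 1`. -/
lemma my_acyclic_bound {W : Type*} [Fintype W] [Nonempty W] (H : SimpleGraph W)
    [Fintype H.edgeSet] (hH : H.IsAcyclic) :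
    H.edgeFinset.card + 1 ≤ Fintype.card W := by
  classical
  have huniq : ∀ {v w : W} (p q : H.Walk v w), p.IsPath → q.IsPath → p = q := by
    intro v w p q hp hq
    exact Subtype.ext_iff.mp (hH.path_unique ⟨p, hp⟩ ⟨q, hq⟩)
  let root : W → W := fun v => (H.connectedComponentMk v).out
  have hmk : ∀ v, H.connectedComponentMk (root v) = H.connectedComponentMk v := by
    intro v
    exact Quot.out_eq _
  have hreach : ∀ v, H.Reachable v (root v) := fun v =>
    (ConnectedComponent.exact (hmk v)).symm
  have hroot_idem : ∀ v, root (root v) = root v := by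
    intro v
    show (H.connectedComponentMk (root v)).out = _
    rw [hmk]
  let pa : ∀ v : W, H.Walk v (root v) := fun v => ((hreach v).some.toPath : H.Path _ _).1
  have hpa : ∀ v, (pa v).IsPath := fun v => ((hreach v).some.toPath).2
  let par : W → W := fun v => (pa v).getVert 1
  have hparself : ∀ v, root v = v → par v = v := by
    intro v hv
    have h1 : ((pa v).copy rfl hv).IsPath := (Walk.isPath_copy _ rfl hv).mpr (hpa v)
    have h2 := huniq ((pa v).copy rfl hv) Walk.nil h1 (Walk.IsPath.nil)
    have h3 : (pa v).length = 0 := by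
      have := congrArg Walk.length h2
      rwa [Walk.length_copy, Walk.length_nil] at this
    show (pa v).getVert 1 = v
    rw [Walk.getVert_of_length_le _ (by omega : (pa v).length ≤ 1), hv]
  have key : ∀ a b : W, H.Adj a b → b = par a ∨ a = par b := by
    intro a b hab
    have hrooteq : root a = root b := by
      show (H.connectedComponentMk a).out = (H.connectedComponentMk b).out
      rw [ConnectedComponent.connectedComponentMk_eq_of_adj hab]
    by_cases hb : b ∈ (pa a).support
    · left
      have ht : ((pa a).takeUntil b hb).IsPath := (hpa a).takeUntil hb
      have hone : (Walk.cons hab (Walk.nil' b)).IsPath := by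
        simp [Walk.cons_isPath_iff, hab.ne]
      have heq : (pa a).takeUntil b hb = Walk.cons hab (Walk.nil' b) :=
        huniq _ _ ht hone
      have hsplit : pa a = Walk.cons hab ((pa a).dropUntil b hb) := by
        conv_lhs => rw [← Walk.take_spec (pa a) hb]
        rw [heq]
        rfl
      show b = (pa a).getVert 1
      rw [hsplit, (Walk.getVert_cons_succ (n := 0) _ _).trans (Walk.getVert_zero _)]
    · right
      have hq : (Walk.cons hab.symm (pa a)).IsPath := (hpa a).cons hb
      have hq' : ((Walk.cons hab.symm (pa a)).copy rfl hrooteq).IsPath :=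
        (Walk.isPath_copy _ rfl hrooteq).mpr hq
      have heq : pa b = (Walk.cons hab.symm (pa a)).copy rfl hrooteq :=
        huniq _ _ (hpa b) hq'
      show a = (pa b).getVert 1
      rw [heq, Walk.getVert_copy, (Walk.getVert_cons_succ (n := 0) _ _).trans (Walk.getVert_zero _)]
  obtain ⟨v0⟩ := ‹Nonempty W›
  have hsub : H.edgeFinset ⊆ Finset.image (fun v => s(v, par v)) (Finset.univ.erase (root v0)) := by
    intro e he
    rw [mem_edgeFinset] at he
    induction e with
    | h a b =>
      have hab : H.Adj a b := he
      have haux : ∀ x y : W, H.Adj x y → y = par x → x ≠ root v0 := by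
        intro x y hxy hy hx
        have : root x = x := by rw [hx, hroot_idem]
        rw [hparself x this] at hy
        exact hxy.ne hy.symm
      rcases key a b hab with h | h
      · exact Finset.mem_image.mpr ⟨a, Finset.mem_erase.mpr ⟨haux a b hab h, Finset.mem_univ a⟩,
          by rw [← h]⟩
      · refine Finset.mem_image.mpr ⟨b, Finset.mem_erase.mpr ⟨haux b a hab.symm h,
          Finset.mem_univ b⟩, ?_⟩
        rw [← h, Sym2.eq_swap]
  have hle : H.edgeFinset.card ≤ (Finset.univ.erase (root v0)).card :=
    le_trans (Finset.card_le_card hsub) (Finset.card_image_le)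
  rw [Finset.card_erase_of_mem (Finset.mem_univ _), Finset.card_univ] at hle
  have : 1 ≤ Fintype.card W := Fintype.card_pos
  omega

lemma my_decycling_bound {V : Type*} [Fintype V] [DecidableEq V]
    (G : SimpleGraph V) [DecidableRel G.Adj] (hconn : G.Connected) (hΔ : 2 ≤ G.maxDegree)
    (S : Set V) (hS : G.IsDecyclingSet S) :
    ((G.maxDegree : ℤ) - 1) * (S.ncard : ℤ) ≥
      (G.edgeFinset.card : ℤ) - (Fintype.card V : ℤ) + 1 := by
  classical
  haveI hne : Nonempty V := hconn.nonempty
  set Δ := G.maxDegree with hΔdef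
  set s : Finset V := S.toFinset with hsdef
  have hk : S.ncard = s.card := by rw [Set.ncard_eq_toFinset_card']
  set p : Sym2 V → Prop := fun e => ∀ v ∈ e, v ∉ S with hpdef
  have hsplit := Finset.card_filter_add_card_filter_not (s := G.edgeFinset) (p := p)
  set E1 := G.edgeFinset.filter p with hE1def
  set E2 := G.edgeFinset.filter (fun e => ¬ p e) with hE2def
  have hE2 : E2.card ≤ Δ * s.card := by
    have hsub : E2 ⊆ s.biUnion (fun v => G.incidenceFinset v) := by
      intro e he
      rw [hE2def, Finset.mem_filter] at he
      obtain ⟨hee, hne'⟩ := he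
      simp only [hpdef] at hne'
      push_neg at hne'
      obtain ⟨v, hv, hvS⟩ := hne'
      refine Finset.mem_biUnion.mpr ⟨v, Set.mem_toFinset.mpr hvS, ?_⟩
      rw [mem_incidenceFinset]
      exact ⟨mem_edgeFinset.mp hee, hv⟩
    calc E2.card ≤ ∑ v ∈ s, (G.incidenceFinset v).card :=
          le_trans (Finset.card_le_card hsub) Finset.card_biUnion_le
      _ = ∑ v ∈ s, G.degree v := by
          simp [card_incidenceFinset_eq_degree]
      _ ≤ ∑ _v ∈ s, Δ := Finset.sum_le_sum fun v _ => G.degree_le_maxDegree v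
      _ = Δ * s.card := by rw [Finset.sum_const, smul_eq_mul, mul_comm]
  haveI : Fintype ↥(Sᶜ) := Fintype.ofFinite _
  haveI : Fintype (G.induce Sᶜ).edgeSet := Fintype.ofFinite _
  have hE1 : E1.card ≤ (G.induce Sᶜ).edgeFinset.card := by
    apply Finset.card_le_card_of_surjOn (Sym2.map (Subtype.val : ↥(Sᶜ) → V))
    intro e he
    rw [Finset.mem_coe, hE1def, Finset.mem_filter] at he
    obtain ⟨hee, hpe⟩ := he
    induction e with
    | h a b =>
      have hab : G.Adj a b := mem_edgeFinset.mp hee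
      have ha : a ∈ Sᶜ := hpe a (Sym2.mem_mk_left a b)
      have hb : b ∈ Sᶜ := hpe b (Sym2.mem_mk_right a b)
      refine ⟨s(⟨a, ha⟩, ⟨b, hb⟩), ?_, by simp⟩
      rw [Finset.mem_coe, mem_edgeFinset]
      exact hab
  by_cases hcne : (Sᶜ : Set V).Nonempty
  · haveI : Nonempty ↥(Sᶜ) := hcne.to_subtype
    have hforest := my_acyclic_bound (G.induce Sᶜ) hS
    have hcard : Fintype.card ↥(Sᶜ) = Fintype.card V - s.card := by
      rw [Fintype.card_compl_set]
      congr 1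
      rw [hsdef, Set.toFinset_card]
    rw [hcard] at hforest
    have hsle : s.card ≤ Fintype.card V := Finset.card_le_univ s
    set m := Δ * s.card with hmdef
    have hgoal : ((Δ : ℤ) - 1) * (S.ncard : ℤ) = (m : ℤ) - s.card := by
      rw [hk, hmdef]
      push_cast
      ring
    rw [hgoal]
    omega
  · rw [Set.not_nonempty_iff_eq_empty] at hcne
    have hSuniv : S = Set.univ := by
      rwa [← Set.compl_empty_iff]
    have hkV : S.ncard = Fintype.card V := by
      rw [hSuniv, Set.ncard_univ, Nat.card_eq_fintype_card]
    have h2E : 2 * G.edgeFinset.card ≤ Δ * Fintype.card V := by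
      rw [← G.sum_degrees_eq_twice_card_edges]
      calc ∑ v, G.degree v ≤ ∑ _v : V, Δ :=
            Finset.sum_le_sum fun v _ => G.degree_le_maxDegree v
        _ = Δ * Fintype.card V := by
            rw [Finset.sum_const, smul_eq_mul, Finset.card_univ, mul_comm]
    have hV1 : 1 ≤ Fintype.card V := Fintype.card_pos
    have h2m : 2 * 1 ≤ Δ * Fintype.card V := Nat.mul_le_mul hΔ hV1
    set m := Δ * Fintype.card V with hmdef
    have hgoal : ((Δ : ℤ) - 1) * (S.ncard : ℤ) = (m : ℤ) - Fintype.card V := by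
      rw [hkV, hmdef]
      push_cast
      ring
    rw [hgoal]
    omega

theorem decyclingNumber_lower_bound {V : Type*} [Fintype V] [DecidableEq V]
    (G : SimpleGraph V) [DecidableRel G.Adj] (hconn : G.Connected) (hΔ : 2 ≤ G.maxDegree) :
    ((G.decyclingNumber : ℚ) ≥
        ((G.edgeFinset.card : ℚ) - (Fintype.card V : ℚ) + 1) / ((G.maxDegree : ℚ) - 1)) ∧
    ∀ S : Set V, G.IsDecyclingSet S →
      ((G.maxDegree : ℤ) - 1) * (S.ncard : ℤ) ≥
        (G.edgeFinset.card : ℤ) - (Fintype.card V : ℤ) + 1 := by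
  classical
  refine ⟨?_, fun S hS => my_decycling_bound G hconn hΔ S hS⟩
  have huniv : G.IsDecyclingSet Set.univ := by
    intro v c
    exact absurd v.2 (by simp)
  have hnonempty : {k | ∃ S : Set V, G.IsDecyclingSet S ∧ S.ncard = k}.Nonempty :=
    ⟨(Set.univ : Set V).ncard, Set.univ, huniv, rfl⟩
  have hmem := Nat.sInf_mem hnonempty
  obtain ⟨S, hS, hScard⟩ := hmem
  have hbd := my_decycling_bound G hconn hΔ S hS
  rw [hScard] at hbd
  have hpos : (0 : ℚ) < (G.maxDegree : ℚ) - 1 := by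
    have : (2 : ℚ) ≤ (G.maxDegree : ℚ) := by exact_mod_cast hΔ
    linarith
  rw [ge_iff_le, div_le_iff₀ hpos]
  have : ((G.edgeFinset.card : ℚ) - (Fintype.card V : ℚ) + 1) ≤
      ((G.maxDegree : ℚ) - 1) * (G.decyclingNumber : ℚ) := by
    exact_mod_cast hbd
  linarith
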